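/- The function ψ(t,θ) = (e^{-iθ/2}, −i η̂ e^{iθ/2})ᵗ t^{-1/2} e^{-t}, with η̂ ∈ {±1}, satisfies B ψ = 0, where B is the model Bessel operator B = A(θ) ∂_t + B(θ) (1/t) ∂_θ + η̂·diag(1, −1), with A(θ) = [[0, i e^{-iθ}],[i e^{iθ}, 0]] and B(θ) = [[0, e^{-iθ}],[−e^{iθ}, 0]]. -/

import Mathlib

set_option maxHeartbeats 1000000

lemma expDeriv (c : ℂ) (θ : ℝ) :
    HasDerivAt (fun θ' : ℝ => Complex.exp (c * (θ' : ℂ) / 2)) (c / 2 * Complex.exp (c * θ / 2)) θ := by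
  have h : HasDerivAt (fun z : ℂ => Complex.exp (c * z / 2)) (c / 2 * Complex.exp (c * (θ:ℂ) / 2)) (θ:ℂ) := by
    have := (Complex.hasDerivAt_exp (c * (θ:ℂ) / 2)).comp (θ:ℂ)
      (((hasDerivAt_id (θ:ℂ)).const_mul c).div_const 2)
    simpa [mul_comm, Function.comp_def] using this
  exact h.comp_ofReal

lemma expNegDeriv (t : ℝ) :
    HasDerivAt (fun t' : ℝ => Complex.exp (-(t' : ℂ))) (-Complex.exp (-(t:ℂ))) t := by
  have h : HasDerivAt (fun z : ℂ => Complex.exp (-z)) (-Complex.exp (-(t:ℂ))) (t:ℂ) := by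
    have := (Complex.hasDerivAt_exp (-(t:ℂ))).comp (t:ℂ) (hasDerivAt_neg (t:ℂ))
    simpa [Function.comp_def] using this
  exact h.comp_ofReal



/-- The model Bessel operator `B = A(θ) ∂_t + B(θ)(1/t) ∂_θ + η̂ · diag(1,−1)` with
`A(θ) = [[0, i e^{-iθ}],[i e^{iθ},0]]`, `B(θ) = [[0, e^{-iθ}],[−e^{iθ},0]]`. -/
noncomputable def modelBessel (η : ℝ) (u : ℝ → ℝ → Fin 2 → ℂ) (t θ : ℝ) : Fin 2 → ℂ :=
  (!![0, Complex.I * Complex.exp (-(Complex.I) * (θ : ℂ));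
      Complex.I * Complex.exp (Complex.I * (θ : ℂ)), 0]).mulVec
    (deriv (fun t' => u t' θ) t)
  + t⁻¹ • (!![0, Complex.exp (-(Complex.I) * (θ : ℂ));
      -Complex.exp (Complex.I * (θ : ℂ)), 0]).mulVec (deriv (fun θ' => u t θ') θ)
  + (η : ℂ) • (!![1, 0; 0, -1]).mulVec (u t θ)

/-- The explicit section `ψ(t,θ) = (e^{-iθ/2}, −i η̂ e^{iθ/2})ᵗ t^{-1/2} e^{-t}`
lies in the kernel of the model Bessel operator, for `η̂ ∈ {±1}`. -/
theorem statement_10 (η : ℝ) (hη : η = 1 ∨ η = -1) :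
    ∀ t : ℝ, 0 < t → ∀ θ : ℝ,
      modelBessel η (fun t' θ' => fun i =>
        (if i = 0 then Complex.exp (-(Complex.I) * (θ' : ℂ) / 2)
          else -Complex.I * (η : ℂ) * Complex.exp (Complex.I * (θ' : ℂ) / 2))
          * ((t' ^ (-(1/2) : ℝ) : ℝ) : ℂ) * Complex.exp (-(t' : ℂ))) t θ = 0 := by
  intro t ht θ
  have htne : (t:ℂ) ≠ 0 := by exact_mod_cast ht.ne'
  have hηsq : (η:ℂ) * η = 1 := by
    rcases hη with h | h <;> simp [h]
  have hr : HasDerivAt (fun t' : ℝ => ((t' ^ (-(1/2):ℝ) : ℝ) : ℂ))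
      (((-(1/2) * t ^ ((-(1/2):ℝ) - 1) : ℝ)) : ℂ) t :=
    (Real.hasDerivAt_rpow_const (p := (-(1/2):ℝ)) (Or.inl ht.ne')).ofReal_comp
  have he := expNegDeriv t
  have hdt : deriv (fun t' : ℝ => (fun i : Fin 2 =>
      (if i = 0 then Complex.exp (-(Complex.I) * (θ : ℂ) / 2)
        else -Complex.I * (η : ℂ) * Complex.exp (Complex.I * (θ : ℂ) / 2))
        * ((t' ^ (-(1/2) : ℝ) : ℝ) : ℂ) * Complex.exp (-(t' : ℂ)))) t
      = fun i : Fin 2 =>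
      (if i = 0 then Complex.exp (-(Complex.I) * (θ : ℂ) / 2)
        else -Complex.I * (η : ℂ) * Complex.exp (Complex.I * (θ : ℂ) / 2))
        * (((-(1/2) * t ^ ((-(1/2):ℝ) - 1) : ℝ)) : ℂ) * Complex.exp (-(t:ℂ))
      + (if i = 0 then Complex.exp (-(Complex.I) * (θ : ℂ) / 2)
        else -Complex.I * (η : ℂ) * Complex.exp (Complex.I * (θ : ℂ) / 2))
        * ((t ^ (-(1/2):ℝ) : ℝ) : ℂ) * -Complex.exp (-(t:ℂ)) := by
    apply HasDerivAt.deriv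
    apply hasDerivAt_pi.2
    intro i
    have := ((hr.const_mul ((if i = 0 then Complex.exp (-(Complex.I) * (θ : ℂ) / 2)
        else -Complex.I * (η : ℂ) * Complex.exp (Complex.I * (θ : ℂ) / 2)))).mul he)
    simpa [mul_assoc, Pi.mul_def] using this
  have hdθ : deriv (fun θ' : ℝ => (fun i : Fin 2 =>
      (if i = 0 then Complex.exp (-(Complex.I) * (θ' : ℂ) / 2)
        else -Complex.I * (η : ℂ) * Complex.exp (Complex.I * (θ' : ℂ) / 2))
        * ((t ^ (-(1/2):ℝ) : ℝ) : ℂ) * Complex.exp (-(t : ℂ)))) θ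
      = fun i : Fin 2 =>
      (if i = 0 then -(Complex.I) / 2 * Complex.exp (-(Complex.I) * (θ : ℂ) / 2)
        else -Complex.I * (η : ℂ) * (Complex.I / 2 * Complex.exp (Complex.I * (θ : ℂ) / 2)))
        * ((t ^ (-(1/2):ℝ) : ℝ) : ℂ) * Complex.exp (-(t:ℂ)) := by
    apply HasDerivAt.deriv
    apply hasDerivAt_pi.2
    intro i
    fin_cases i
    · simpa using ((expDeriv (-(Complex.I)) θ).mul_const
        (((t ^ (-(1/2):ℝ) : ℝ) : ℂ))).mul_const (Complex.exp (-(t:ℂ)))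
    · simpa using (((expDeriv Complex.I θ).const_mul (-Complex.I * (η:ℂ))).mul_const
        (((t ^ (-(1/2):ℝ) : ℝ) : ℂ))).mul_const (Complex.exp (-(t:ℂ)))
  simp only [modelBessel]
  rw [hdt, hdθ]
  have hr32 : (t ^ ((-(1/2):ℝ) - 1) : ℝ) = t⁻¹ * t ^ (-(1/2):ℝ) := by
    rw [show ((-(1/2):ℝ) - 1) = (-1) + (-(1/2)) by ring, Real.rpow_add ht, Real.rpow_neg_one]
  have hnh : Complex.exp (-(Complex.I) * θ / 2) = (Complex.exp (Complex.I * θ / 2))⁻¹ := by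
    rw [show -(Complex.I)*(θ:ℂ)/2 = -(Complex.I*θ/2) by ring, Complex.exp_neg]
  have hIa : Complex.exp (Complex.I * θ) =
      Complex.exp (Complex.I * θ / 2) * Complex.exp (Complex.I * θ / 2) := by
    rw [← Complex.exp_add]; ring_nf
  have hnI : Complex.exp (-(Complex.I) * θ) =
      (Complex.exp (Complex.I * θ / 2) * Complex.exp (Complex.I * θ / 2))⁻¹ := by
    rw [show -(Complex.I)*(θ:ℂ) = -(Complex.I*θ) by ring, Complex.exp_neg, hIa]
  funext i
  fin_cases i <;>
  · simp only [Matrix.mulVec, dotProduct, Fin.sum_univ_two, Matrix.cons_val',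
      Matrix.cons_val_zero, Matrix.cons_val_one, Matrix.head_cons, Matrix.empty_val',
      Matrix.cons_val_fin_one, Matrix.head_fin_const, Pi.add_apply, Pi.smul_apply,
      smul_eq_mul, Pi.zero_apply, if_true, if_false, Fin.isValue, Matrix.of_apply,
      Complex.real_smul]
    rw [hnh, hIa, hnI, hr32]
    push_cast [Real.rpow_natCast]
    field_simp [Complex.exp_ne_zero, htne]
    ring_nf
    try simp only [Complex.I_sq]
    field_simp
    try ring_nf
    try linear_combination (2 * Complex.I * Complex.exp (Complex.I * (θ:ℂ) * (1 / 2)) ^ 2 *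
      ((t ^ (-1 / 2 : ℝ) : ℝ) : ℂ) * (t : ℂ) * Complex.exp (-(t:ℂ))) * hηsq
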